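/- arXiv:1112.6132 — 3 statements merged into one kernel-verified Lean document; each statement's English description precedes it below -/
import Mathlib

section
/- Let A be a serial finite length abelian category, let X be an indecomposable object of A, let Y₁, …, Y_m be indecomposable objects of A, and let f : X → Y₁ ⊞ ⋯ ⊞ Y_m be a morphism with components f_i : X → Y_i. Then f is a monomorphism if and only if at least one of the components f_i is a monomorphism. -/
open CategoryTheory CategoryTheory.Limits

universe v u

attribute [local instance] CategoryTheory.Abelian.hasFiniteBiproducts

variable {A : Type u} [Category.{v} A] [Abelian A]

/-- An object is uniserial if its subobjects are totally ordered by inclusion. -/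
def Uniserial (U : A) : Prop :=
  ∀ P Q : Subobject U, P ≤ Q ∨ Q ≤ P

/-- A category is serial if every object is isomorphic to a finite biproduct of
uniserial objects. -/
def IsSerial (A : Type u) [Category.{v} A] [Abelian A] : Prop :=
  ∀ X : A, ∃ (m : ℕ) (Y : Fin m → A),
    (∀ i, Uniserial (Y i)) ∧ Nonempty (X ≅ ⨁ Y)

/-- An object is indecomposable if it is nonzero and in any decomposition as a
biproduct one of the summands is zero. -/
def Indec (X : A) : Prop :=
  ¬ IsZero X ∧ ∀ B C : A, Nonempty (X ≅ B ⊞ C) → IsZero B ∨ IsZero C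

/-- In an abelian category, `f` is a monomorphism iff its kernel subobject is trivial. -/
lemma my_mono_iff_kernelSubobject_eq_bot {X Y : A} (f : X ⟶ Y) :
    Mono f ↔ kernelSubobject f = ⊥ := by
  rw [show kernelSubobject f = Subobject.mk (kernel.ι f) from rfl,
    Subobject.mk_eq_bot_iff_zero]
  constructor
  · intro h; exact kernel.ι_of_mono f
  · exact CategoryTheory.Abelian.mono_of_kernel_ι_eq_zero f

/-- Uniserial transports along isomorphisms. -/
lemma uniserial_of_iso {X U : A} (e : X ≅ U) (h : Uniserial U) : Uniserial X := by
  intro P Q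
  rcases h (Subobject.mapIsoToOrderIso e P) (Subobject.mapIsoToOrderIso e Q) with h' | h'
  · exact Or.inl ((Subobject.mapIsoToOrderIso e).le_iff_le.mp h')
  · exact Or.inr ((Subobject.mapIsoToOrderIso e).le_iff_le.mp h')

section FinSucc

variable {n : ℕ} (Z : Fin (n + 1) → A)

lemma my_L1 : biproduct.ι Z 0 ≫ biproduct.lift (fun j : Fin n => biproduct.π Z j.succ) = 0 := by
  apply biproduct.hom_ext
  intro j
  simp only [Category.assoc, biproduct.lift_π, zero_comp]
  exact biproduct.ι_π_ne Z (Fin.succ_ne_zero j).symm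

lemma my_L2 (k : Fin n) :
    biproduct.ι Z k.succ ≫ biproduct.lift (fun j : Fin n => biproduct.π Z j.succ) =
      biproduct.ι (fun j : Fin n => Z j.succ) k := by
  apply biproduct.hom_ext
  intro j
  simp only [Category.assoc, biproduct.lift_π]
  by_cases h : k = j
  · subst h
    rw [biproduct.ι_π_self, biproduct.ι_π_self]
  · rw [biproduct.ι_π_ne _ (fun h' => h (Fin.succ_injective n h')), biproduct.ι_π_ne _ h]

lemma my_L3 : biproduct.desc (fun j : Fin n => biproduct.ι Z j.succ) ≫ biproduct.π Z 0 = 0 := by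
  apply biproduct.hom_ext'
  intro j
  simp only [biproduct.ι_desc_assoc, comp_zero]
  exact biproduct.ι_π_ne Z (Fin.succ_ne_zero j)

lemma my_L4 :
    biproduct.desc (fun j : Fin n => biproduct.ι Z j.succ) ≫
      biproduct.lift (fun j : Fin n => biproduct.π Z j.succ) = 𝟙 _ := by
  apply biproduct.hom_ext'
  intro j
  rw [biproduct.ι_desc_assoc, my_L2, Category.comp_id]

/-- Splitting off the first summand of a finite biproduct. -/
noncomputable def biproductFinSuccIso :
    (⨁ Z) ≅ Z 0 ⊞ ⨁ (fun j : Fin n => Z j.succ) where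
  hom := biprod.lift (biproduct.π Z 0) (biproduct.lift fun j => biproduct.π Z j.succ)
  inv := biprod.desc (biproduct.ι Z 0) (biproduct.desc fun j => biproduct.ι Z j.succ)
  hom_inv_id := by
    apply biproduct.hom_ext'
    intro i
    rw [Category.comp_id, biprod.lift_desc]
    induction i using Fin.cases with
    | zero =>
      rw [Preadditive.comp_add, ← Category.assoc, ← Category.assoc, biproduct.ι_π_self,
        Category.id_comp, my_L1, zero_comp, add_zero]
    | succ k =>
      rw [Preadditive.comp_add, ← Category.assoc, ← Category.assoc,
        biproduct.ι_π_ne Z (Fin.succ_ne_zero k), zero_comp, zero_add, my_L2,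
        biproduct.ι_desc]
  inv_hom_id := by
    apply biprod.hom_ext' <;> apply biprod.hom_ext <;>
      simp only [Category.comp_id, Category.assoc, biprod.inl_fst, biprod.inl_snd,
        biprod.inr_fst, biprod.inr_snd, comp_zero, biprod.lift_fst, biprod.lift_snd,
        biprod.inl_desc_assoc, biprod.inr_desc_assoc] <;>
      first
        | exact biproduct.ι_π_self Z 0
        | exact my_L1 Z
        | exact my_L3 Z
        | exact my_L4 Z

end FinSucc

/-- An empty biproduct is zero. -/
lemma isZero_biproduct_empty (Z : Fin 0 → A) : IsZero (⨁ Z) := by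
  rw [IsZero.iff_id_eq_zero]
  apply biproduct.hom_ext
  exact fun j => j.elim0

/-- Every indecomposable object of a serial abelian category is uniserial. -/
lemma uniserial_of_indec_aux : ∀ (n : ℕ) (Z : Fin n → A), (∀ i, Uniserial (Z i)) →
    ∀ X : A, Indec X → (X ≅ ⨁ Z) → Uniserial X := by
  intro n
  induction n with
  | zero =>
    intro Z _ X hX e
    exact absurd ((isZero_biproduct_empty Z).of_iso e) hX.1
  | succ n ih =>
    intro Z hZ X hX e
    have e2 : X ≅ Z 0 ⊞ ⨁ (fun j : Fin n => Z j.succ) := e ≪≫ biproductFinSuccIso Z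
    rcases hX.2 _ _ ⟨e2⟩ with h | h
    · exact ih _ (fun j => hZ _) X hX (e2 ≪≫ (isoZeroBiprod h).symm)
    · exact uniserial_of_iso (e2 ≪≫ (isoBiprodZero h).symm) (hZ 0)

lemma uniserial_of_indec (hser : IsSerial A) (X : A) (hX : Indec X) : Uniserial X := by
  obtain ⟨n, Z, hZ, ⟨e⟩⟩ := hser X
  exact uniserial_of_indec_aux n Z hZ X hX e

/-- A pairwise comparable finite nonempty family has a least element. -/
lemma exists_min_of_pairwise {α : Type*} [PartialOrder α] :
    ∀ (n : ℕ) (K : Fin (n + 1) → α), (∀ i j, K i ≤ K j ∨ K j ≤ K i) →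
      ∃ i, ∀ j, K i ≤ K j := by
  intro n
  induction n with
  | zero =>
    refine fun K _ => ⟨0, fun j => ?_⟩
    have : j = 0 := Fin.fin_one_eq_zero j
    rw [this]
  | succ n ih =>
    intro K h
    obtain ⟨i, hi⟩ := ih (fun j => K j.succ) (fun i j => h _ _)
    rcases h i.succ 0 with h' | h'
    · exact ⟨i.succ, fun j => Fin.cases h' (fun j => hi j) j⟩
    · exact ⟨0, fun j => Fin.cases le_rfl (fun j => h'.trans (hi j)) j⟩

theorem mono_iff_exists_component_mono
    -- `A` is a serial finite length abelian category
    [∀ X : A, IsArtinianObject X] [∀ X : A, IsNoetherianObject X]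
    (hser : IsSerial A)
    (X : A) (hX : Indec X) (m : ℕ) (Y : Fin m → A) (hY : ∀ i, Indec (Y i))
    (f : X ⟶ ⨁ Y) :
    Mono f ↔ ∃ i, Mono (f ≫ biproduct.π Y i) := by
  constructor
  · intro hf
    have hXu : Uniserial X := uniserial_of_indec hser X hX
    cases m with
    | zero =>
      exfalso
      apply hX.1
      rw [IsZero.iff_id_eq_zero]
      have hfz : f = 0 := (isZero_biproduct_empty Y).eq_of_tgt f 0
      have h1 : 𝟙 X ≫ f = 0 ≫ f := by rw [hfz]; simp
      rw [cancel_mono f] at h1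
      simpa using h1
    | succ n =>
      set K : Fin (n + 1) → Subobject X := fun i => kernelSubobject (f ≫ biproduct.π Y i)
        with hK
      obtain ⟨i₀, hi₀⟩ := exists_min_of_pairwise n K (fun i j => hXu _ _)
      refine ⟨i₀, (my_mono_iff_kernelSubobject_eq_bot _).mpr ?_⟩
      have hbot : kernelSubobject f = ⊥ := (my_mono_iff_kernelSubobject_eq_bot f).mp hf
      have harrow : (K i₀).arrow ≫ f = 0 := by
        apply biproduct.hom_ext
        intro j
        have h0 : (K j).arrow ≫ f ≫ biproduct.π Y j = 0 := by
          show (kernelSubobject (f ≫ biproduct.π Y j)).arrow ≫ f ≫ biproduct.π Y j = 0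
          exact kernelSubobject_arrow_comp (f ≫ biproduct.π Y j)
        rw [Category.assoc, zero_comp, ← Subobject.ofLE_arrow (hi₀ j), Category.assoc, h0,
          comp_zero]
      have hle : K i₀ ≤ kernelSubobject f := by
        refine Subobject.le_mk_of_comm (kernel.lift f (K i₀).arrow harrow) ?_
        exact kernel.lift_ι f (K i₀).arrow harrow
      exact le_bot_iff.mp (hbot ▸ hle)
  · rintro ⟨i, hi⟩
    exact mono_of_mono f (biproduct.π Y i)
end

section
/- Let K be a field and let (V_m)_{m ∈ ℕ} be an inverse system of finite-dimensional K-vector spaces with transition maps π_m : V_{m+1} → V_m, such that every π_m is surjective and the dimensions dim_K V_m are unbounded. Then the inverse limit lim_m V_m is isomorphic as a K-vector space to the product ∏_{m ∈ ℕ} K (i.e., to the space of all functions ℕ → K). -/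
/-- The inverse limit of an inverse system of `K`-vector spaces indexed by `ℕ`,
realized as the subspace of the product consisting of compatible sequences. -/
def natInverseLimit (K : Type*) [Field K] (V : ℕ → Type*)
    [∀ m, AddCommGroup (V m)] [∀ m, Module K (V m)]
    (π : ∀ m, V (m + 1) →ₗ[K] V m) : Submodule K (∀ m, V m) where
  carrier := {v | ∀ m, π m (v (m + 1)) = v m}
  add_mem' {v w} hv hw := fun m => by simp [hv m, hw m]
  zero_mem' := fun m => by simp
  smul_mem' c {v} hv := fun m => by simp [hv m]

theorem inverseLimit_iso_pi_of_surjective_of_unbounded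
    (K : Type*) [Field K] (V : ℕ → Type*)
    [∀ m, AddCommGroup (V m)] [∀ m, Module K (V m)]
    [∀ m, FiniteDimensional K (V m)]
    (π : ∀ m, V (m + 1) →ₗ[K] V m)
    (hsurj : ∀ m, Function.Surjective (π m))
    (hunbdd : ∀ N : ℕ, ∃ m, N < Module.finrank K (V m)) :
    Nonempty (natInverseLimit K V π ≃ₗ[K] (ℕ → K)) := by
  classical
  -- linear sections of the transition maps
  choose s hs using fun m =>
    (π m).exists_rightInverse_of_surjective (LinearMap.range_eq_top.2 (hsurj m))
  have hs' : ∀ m x, π m (s m x) = x := fun m x => LinearMap.congr_fun (hs m) x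
  -- the "difference" linear map to V 0 × ∏ ker (π m)
  let F : natInverseLimit K V π →ₗ[K] V 0 × (∀ m, LinearMap.ker (π m)) :=
    { toFun := fun v => (v.1 0, fun m => ⟨v.1 (m + 1) - s m (v.1 m), by
        simp [LinearMap.mem_ker, map_sub, hs' m, v.2 m]⟩)
      map_add' := fun v w => by
        refine Prod.ext rfl ?_
        funext m
        apply Subtype.ext
        simp only [Submodule.coe_add, Pi.add_apply, map_add, Prod.snd_add]
        abel
      map_smul' := fun c v => by
        refine Prod.ext rfl ?_
        funext m
        apply Subtype.ext
        simp [smul_sub] }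
  have hFinj : Function.Injective F := by
    rw [injective_iff_map_eq_zero]
    intro v hv
    have h0 : v.1 0 = 0 := congrArg Prod.fst hv
    have h1 : ∀ m, v.1 (m + 1) = s m (v.1 m) := by
      intro m
      have h2 : (F v).2 m = 0 := by rw [hv]; rfl
      have h3 : v.1 (m + 1) - s m (v.1 m) = 0 := congrArg Subtype.val h2
      exact sub_eq_zero.mp h3
    have : ∀ m, v.1 m = 0 := by
      intro m
      induction m with
      | zero => exact h0
      | succ k ih => rw [h1 k, ih, map_zero]
    exact Subtype.ext (funext this)
  have hFsurj : Function.Surjective F := by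
    rintro ⟨a, w⟩
    let g : ∀ m, V m := fun m => Nat.rec a (fun k x => s k x + (w k).1) m
    have hg : ∀ m, π m (g (m + 1)) = g m := by
      intro m
      have : g (m + 1) = s m (g m) + (w m).1 := rfl
      rw [this, map_add, hs' m, (w m).2, add_zero]
    refine ⟨⟨g, hg⟩, ?_⟩
    refine Prod.ext rfl ?_
    funext m
    apply Subtype.ext
    show g (m + 1) - s m (g m) = (w m).1
    have : g (m + 1) = s m (g m) + (w m).1 := rfl
    rw [this]; abel
  let e1 : natInverseLimit K V π ≃ₗ[K] V 0 × (∀ m, LinearMap.ker (π m)) :=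
    LinearEquiv.ofBijective F ⟨hFinj, hFsurj⟩
  -- dimensions
  set d : ℕ → ℕ := fun m => Module.finrank K (LinearMap.ker (π m)) with hd
  -- S is infinite
  have hmono : Monotone fun m => Module.finrank K (V m) := by
    apply monotone_nat_of_le_succ
    intro m
    have : LinearMap.range (π m) = ⊤ := LinearMap.range_eq_top.2 (hsurj m)
    calc Module.finrank K (V m) = Module.finrank K (LinearMap.range (π m)) := by
          rw [this, finrank_top]
      _ ≤ Module.finrank K (V (m + 1)) := (π m).finrank_range_le
  have hstep : ∀ m, d m = 0 → Module.finrank K (V (m + 1)) = Module.finrank K (V m) := by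
    intro m h
    have hker : LinearMap.ker (π m) = ⊥ := Submodule.finrank_eq_zero.mp h
    have : Function.Bijective (π m) := ⟨LinearMap.ker_eq_bot.mp hker, hsurj m⟩
    exact (LinearEquiv.ofBijective (π m) this).finrank_eq
  have hinf : Infinite (Σ m, Fin (d m)) := by
    by_contra h
    rw [not_infinite_iff_finite] at h
    have hfin : {m | 0 < d m}.Finite :=
      Set.Finite.subset (Set.finite_range fun x : Σ m, Fin (d m) => x.1)
        (fun m hm => ⟨⟨m, ⟨0, hm⟩⟩, rfl⟩)
    obtain ⟨M, hM⟩ := hfin.bddAbove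
    have hzero : ∀ m, M < m → d m = 0 := by
      intro m hm
      by_contra hne
      exact absurd (hM (Nat.pos_of_ne_zero hne)) (not_le.mpr hm)
    have hconst : ∀ j, Module.finrank K (V (M + 1 + j)) = Module.finrank K (V (M + 1)) := by
      intro j
      induction j with
      | zero => rfl
      | succ k ih =>
        have : M + 1 + (k + 1) = (M + 1 + k) + 1 := by ring
        rw [this, hstep _ (hzero _ (by omega)), ih]
    have hbdd : ∀ m, Module.finrank K (V m) ≤ Module.finrank K (V (M + 1)) := by
      intro m
      rcases le_or_gt m (M + 1) with hle | hlt
      · exact hmono hle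
      · have : m = M + 1 + (m - (M + 1)) := by omega
        rw [this, hconst]
    obtain ⟨m, hm⟩ := hunbdd (Module.finrank K (V (M + 1)))
    exact absurd (hbdd m) (not_le.mpr hm)
  haveI := hinf
  -- assemble the chain of linear equivalences
  let e2 : V 0 ≃ₗ[K] (Fin (Module.finrank K (V 0)) → K) :=
    (Module.finBasis K (V 0)).equivFun
  let e3 : (∀ m, LinearMap.ker (π m)) ≃ₗ[K] ∀ m, (Fin (d m) → K) :=
    LinearEquiv.piCongrRight fun m => (Module.finBasis K (LinearMap.ker (π m))).equivFun
  let e4 : (∀ m, Fin (d m) → K) ≃ₗ[K] ((Σ m, Fin (d m)) → K) :=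
    (LinearEquiv.piCurry K fun _ _ => K).symm
  let e5 := (LinearEquiv.sumArrowLequivProdArrow (Fin (Module.finrank K (V 0)))
    (Σ m, Fin (d m)) K K).symm
  obtain ⟨eS⟩ : Nonempty (ℕ ≃ (Fin (Module.finrank K (V 0)) ⊕ (Σ m, Fin (d m)))) := nonempty_equiv_of_countable
  let e6 : ((Fin (Module.finrank K (V 0)) ⊕ (Σ m, Fin (d m))) → K) ≃ₗ[K] (ℕ → K) := LinearEquiv.funCongrLeft K K eS
  exact ⟨e1.trans ((e2.prodCongr (e3.trans e4)).trans (e5.trans e6))⟩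
end

section
/- Fix an integer n ≥ 1 and let P = {(a, b) ∈ ℤ × ℤ : b ≥ a + 2}. Let k ≥ 1 and let 0 ≤ i_0 < i_1 < ⋯ < i_{k-1} ≤ n − 1 be integers, and set i_k = i_0 + n. Then for every (a, b) ∈ P the following are equivalent: (1) for every r ∈ {0, …, k−1} there exists m ∈ ℤ with (a + mn, b + mn) ∈ W(i_r, i_r + n); (2) there exist r ∈ {0, …, k−1} and m ∈ ℤ with (a + mn, b + mn) ∈ W(i_r, i_{r+1}). Moreover, the index r in (2) is unique: if (a + mn, b + mn) ∈ W(i_r, i_{r+1}) and (a + m'n, b + m'n) ∈ W(i_s, i_{s+1}) for r, s ∈ {0, …, k−1} and m, m' ∈ ℤ, then r = s. -/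
/-- The wing `W(i, i')`: pairs `(a, b)` with `b ≥ a + 2`, `i ≤ a` and `b ≤ i'`. -/
def InWing (i i' a b : ℤ) : Prop :=
  a + 2 ≤ b ∧ i ≤ a ∧ b ≤ i'

theorem wings_intersection
    (n : ℤ) (hn : 1 ≤ n) (k : ℕ) (hk : 1 ≤ k) (i : ℕ → ℤ)
    (hmono : ∀ r s : ℕ, r < s → s < k → i r < i s)
    (h0 : 0 ≤ i 0) (hlast : i (k - 1) ≤ n - 1) (hik : i k = i 0 + n) :
    ∀ a b : ℤ, a + 2 ≤ b →
      (((∀ r < k, ∃ m : ℤ, InWing (i r) (i r + n) (a + m * n) (b + m * n)) ↔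
          (∃ r < k, ∃ m : ℤ, InWing (i r) (i (r + 1)) (a + m * n) (b + m * n))) ∧
        (∀ r < k, ∀ s < k, ∀ m m' : ℤ,
          InWing (i r) (i (r + 1)) (a + m * n) (b + m * n) →
          InWing (i s) (i (s + 1)) (a + m' * n) (b + m' * n) → r = s)) := by
  classical
  have hub : ∀ r : ℕ, r < k → i r ≤ n - 1 := by
    intro r hr
    by_cases h : r = k - 1
    · rw [h]; exact hlast
    · exact le_trans (le_of_lt (hmono r (k-1) (by omega) (by omega))) hlast
  have hlb : ∀ r : ℕ, r < k → 0 ≤ i r := by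
    intro r hr
    rcases Nat.eq_zero_or_pos r with rfl | h
    · exact h0
    · exact le_trans h0 (le_of_lt (hmono 0 r h hr))
  have mono' : ∀ r s : ℕ, r ≤ s → s ≤ k → i r ≤ i s := by
    intro r s hrs hsk
    rcases eq_or_lt_of_le hrs with rfl | h
    · exact le_refl _
    rcases eq_or_lt_of_le hsk with rfl | hs
    · rw [hik]
      have := hub r (by omega)
      linarith
    · exact le_of_lt (hmono r s h hs)
  have mstep : ∀ m m' : ℤ, m * n < m' * n → m * n + n ≤ m' * n := by
    intro m m' h
    have h1 : m < m' := lt_of_mul_lt_mul_right h (show (0:ℤ) ≤ n by omega)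
    have h2 : m + 1 ≤ m' := by omega
    have h3 : (m + 1) * n ≤ m' * n := mul_le_mul_of_nonneg_right h2 (by omega)
    nlinarith
  intro a b hab
  have key : ∀ r s : ℕ, ∀ m m' : ℤ, r < s → s < k →
      InWing (i r) (i (r + 1)) (a + m * n) (b + m * n) →
      InWing (i s) (i (s + 1)) (a + m' * n) (b + m' * n) → False := by
    intro r s m m' hrs hsk ⟨w1, w2, w3⟩ ⟨v1, v2, v3⟩
    have h1 : i (r+1) ≤ i s := mono' (r+1) s (by omega) (by omega)
    have h2 : i (s+1) ≤ i k := mono' (s+1) k (by omega) le_rfl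
    have h3 : i 0 ≤ i r := mono' 0 r (by omega) (by omega)
    have hlt : m * n < m' * n := by linarith
    have := mstep m m' hlt
    rw [hik] at h2
    linarith
  refine ⟨⟨?_, ?_⟩, ?_⟩
  · -- (1) → (2)
    intro h1
    obtain ⟨m, hm1, hm2, hm3⟩ := h1 0 hk
    set q := Nat.findGreatest (fun r => i r ≤ a + m * n) (k - 1) with hq
    have hq1 : i q ≤ a + m * n := by
      have := Nat.findGreatest_spec (P := fun r => i r ≤ a + m * n) (Nat.zero_le (k-1)) hm2
      simpa [hq] using this
    have hqk : q < k := lt_of_le_of_lt (Nat.findGreatest_le _) (by omega)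
    refine ⟨q, hqk, m, by linarith, hq1, ?_⟩
    by_cases hcase : q + 1 = k
    · rw [hcase, hik]; linarith
    · by_contra hcon
      push_neg at hcon
      obtain ⟨m', h1', h2', h3'⟩ := h1 (q+1) (by omega)
      have hmax : ¬ (i (q+1) ≤ a + m * n) :=
        Nat.findGreatest_is_greatest (P := fun r => i r ≤ a + m * n) (n := k-1)
          (by omega) (by omega)
      push_neg at hmax
      have hlt : m * n < m' * n := by linarith
      have := mstep m m' hlt
      linarith
  · -- (2) → (1)
    rintro ⟨r, hr, m, h1, h2, h3⟩ s hs
    rcases le_or_gt s r with hsr | hrs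
    · refine ⟨m, by linarith, le_trans (mono' s r hsr (le_of_lt hr)) h2, ?_⟩
      have h4 : i (r+1) ≤ i k := mono' (r+1) k (by omega) le_rfl
      have h5 : i 0 ≤ i s := mono' 0 s (by omega) (by omega)
      rw [hik] at h4
      linarith
    · refine ⟨m + 1, by linarith, ?_, ?_⟩
      · have h4 : i s ≤ n - 1 := hub s hs
        have h5 : 0 ≤ i r := hlb r hr
        nlinarith
      · have h4 : i (r+1) ≤ i s := mono' (r+1) s (by omega) (by omega)
        nlinarith
  · -- uniqueness
    intro r hr s hs m m' hw hw'
    rcases lt_trichotomy r s with h | h | h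
    · exact absurd (key r s m m' h hs hw hw') (fun x => x)
    · exact h
    · exact absurd (key s r m' m h hr hw' hw) (fun x => x)
end
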